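/- For any correlation t of length n, the number of ordered pairs (u,v) of words of length n over Σ with c(u,v) = t equals the number of words w of length 2n over Σ whose autocorrelation has t as a suffix. That is, p(t) = g(t). -/

import Mathlib

/-- Correlation of two words of length `m` (as functions `Fin m → α`):
bit `i` is `1` iff `u[i+k] = v[k]` for all `k` with `i + k < m`. -/
def corrF {α : Type*} [DecidableEq α] {m : ℕ} (u v : Fin m → α) : Fin m → Bool :=
  fun i => decide (∀ j k : Fin m, (j : ℕ) = (i : ℕ) + (k : ℕ) → u j = v k)

/-- Glue two words of length `n` into a word of length `2n` (v first, then u). -/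
def glueF {α : Type*} {n : ℕ} (u v : Fin n → α) : Fin (2 * n) → α :=
  fun j => if h : (j : ℕ) < n then v ⟨j, h⟩ else u ⟨(j : ℕ) - n, by have := j.isLt; omega⟩

lemma glue_corr {α : Type*} [DecidableEq α] {n : ℕ} (u v : Fin n → α) (i : Fin n) :
    corrF (glueF u v) (glueF u v) ⟨n + (i : ℕ), by rw [Nat.two_mul]; exact Nat.add_lt_add_left i.isLt n⟩ = corrF u v i := by
  unfold corrF
  rw [decide_eq_decide]
  constructor
  · intro H j k hjk
    have hj : n + (j : ℕ) < 2 * n := by have := j.isLt; omega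
    have hk : (k : ℕ) < 2 * n := by have := k.isLt; omega
    have h := H ⟨n + j, hj⟩ ⟨k, hk⟩ (by simp only [Fin.val_mk]; omega)
    have e1 : glueF u v ⟨n + (j : ℕ), hj⟩ = u j := by
      simp only [glueF]
      rw [dif_neg (by omega)]
      exact congrArg u (Fin.ext (by simp))
    have e2 : glueF u v ⟨(k : ℕ), hk⟩ = v k := by
      simp only [glueF]
      rw [dif_pos k.isLt]
    rw [e1, e2] at h
    exact h
  · intro H j k hjk
    simp only [Fin.val_mk] at hjk
    have hjn : n ≤ (j : ℕ) := by omega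
    have hkn : (k : ℕ) < n := by have := j.isLt; have := i.isLt; omega
    have hjn2 : (j : ℕ) - n < n := by have := j.isLt; omega
    have h := H ⟨(j : ℕ) - n, hjn2⟩ ⟨(k : ℕ), hkn⟩ (by simp only [Fin.val_mk]; omega)
    simp only [glueF]
    rw [dif_neg (by omega), dif_pos hkn]
    exact h

/-- `p(t) = g(t)`: the number of pairs `(u,v)` of words of length `n` with correlation `t`
equals the number of words `w` of length `2n` whose autocorrelation has `t` as a suffix. -/
theorem stmt6 {α : Type*} [DecidableEq α] [Fintype α] (n : ℕ) (t : Fin n → Bool) :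
    Nat.card {p : (Fin n → α) × (Fin n → α) // corrF p.1 p.2 = t} =
      Nat.card {w : Fin (2 * n) → α //
        ∀ i : Fin n, corrF w w ⟨n + (i : ℕ), by have := i.isLt; omega⟩ = t i} := by
  apply Nat.card_congr
  refine
    { toFun := fun p => ⟨glueF p.1.1 p.1.2, fun i => by
        rw [glue_corr, p.2]⟩
      invFun := fun w => ⟨(fun i => w.1 ⟨n + (i : ℕ), by have := i.isLt; omega⟩,
                           fun i => w.1 ⟨(i : ℕ), by have := i.isLt; omega⟩), ?_⟩
      left_inv := ?_
      right_inv := ?_ }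
  · -- corrF of halves equals t
    funext i
    rw [← glue_corr]
    have hg : glueF (fun i : Fin n => w.1 ⟨n + (i : ℕ), by have := i.isLt; omega⟩)
        (fun i : Fin n => w.1 ⟨(i : ℕ), by have := i.isLt; omega⟩) = w.1 := by
      funext j
      simp only [glueF]
      split
      · exact congrArg w.1 (Fin.ext (by simp))
      · exact congrArg w.1 (Fin.ext (by simp; omega))
    rw [hg]
    exact w.2 i
  · intro p
    refine Subtype.ext (Prod.ext ?_ ?_)
    · funext i
      simp only [glueF]
      rw [dif_neg (by omega)]
      exact congrArg p.1.1 (Fin.ext (by simp))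
    · funext i
      simp only [glueF]
      rw [dif_pos i.isLt]
  · intro w
    refine Subtype.ext ?_
    funext j
    simp only [glueF]
    split
    · exact congrArg w.1 (Fin.ext (by simp))
    · exact congrArg w.1 (Fin.ext (by simp; omega))
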